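/- arXiv:math/0010243 — 4 statements merged into one kernel-verified Lean document; each statement's English description precedes it below -/
import Mathlib

section
/- Let $L$ be a hermitian positive definite biinfinite Toeplitz matrix (bounded and boundedly invertible on $\ell^2(\mathbb{Z})$), $y \in \ell^2(\mathbb{Z})$, and $x = L^{-1}y$. Let $x^{(n)} = L_n^{-1} P_n y$ be the finite section solution, where $L_n = P_n L P_n$. Then $x^{(n)} \to x$ in $\ell^2(\mathbb{Z})$ as $n \to \infty$. -/
open Complex Real Filter

noncomputable abbrev l2Z : Type := lp (fun _ : ℤ => ℂ) 2

lemma inner_eq_zero_of_disjoint_support (u v : l2Z)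
    (h : ∀ k : ℤ, (u : ∀ _ : ℤ, ℂ) k = 0 ∨ (v : ∀ _ : ℤ, ℂ) k = 0) :
    (inner ℂ u v : ℂ) = 0 := by
  rw [lp.inner_eq_tsum]
  convert tsum_zero with k
  rcases h k with h' | h' <;> simp [h', inner]

theorem finite_section_convergence
    (a : ℤ → ℂ)
    (L : l2Z →L[ℂ] l2Z) (hL_sa : IsSelfAdjoint L)
    (e : ℤ → l2Z) (he : ∀ k : ℤ, e k = lp.single 2 k 1)
    (hToep : ∀ k l : ℤ, (inner ℂ (e k) (L (e l)) : ℂ) = a (k - l))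
    (δ : ℝ) (hδ : 0 < δ)
    (hL_pd : ∀ x : l2Z, δ * ‖x‖ ^ 2 ≤ (inner ℂ x (L x) : ℂ).re)
    (Linv : l2Z →L[ℂ] l2Z)
    (hLinv₁ : L.comp Linv = ContinuousLinearMap.id ℂ l2Z)
    (hLinv₂ : Linv.comp L = ContinuousLinearMap.id ℂ l2Z)
    (y : l2Z)
    (xn : ℕ → l2Z)
    (hsupp : ∀ (n : ℕ) (k : ℤ), (n : ℤ) ≤ |k| → (xn n : ∀ _ : ℤ, ℂ) k = 0)
    (hsolve : ∀ (n : ℕ) (k : ℤ), |k| < (n : ℤ) →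
      (L (xn n) : ∀ _ : ℤ, ℂ) k = (y : ∀ _ : ℤ, ℂ) k) :
    Tendsto xn atTop (nhds (Linv y)) := by
  set x : l2Z := Linv y with hx
  have hLx : L x = y := by
    have := congrArg (fun T : l2Z →L[ℂ] l2Z => T y) hLinv₁
    simpa using this
  -- truncations of x
  set s : ℕ → Finset ℤ := fun n => Finset.Ioo (-(n : ℤ)) n with hs
  set z : ℕ → l2Z := fun n => ∑ k ∈ s n, lp.single 2 k ((x : ∀ _ : ℤ, ℂ) k) with hz
  have hzk : ∀ (n : ℕ) (k : ℤ),
      (z n : ∀ _ : ℤ, ℂ) k = if k ∈ s n then (x : ∀ _ : ℤ, ℂ) k else 0 := by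
    intro n k
    simp only [hz]
    rw [lp.coeFn_sum, Finset.sum_apply]
    simp [lp.single_apply, Finset.sum_dite_eq]
  have hmem : ∀ (n : ℕ) (k : ℤ), k ∈ s n ↔ |k| < (n : ℤ) := by
    intro n k
    simp [hs, Finset.mem_Ioo, abs_lt, and_comm]
  -- z n → x
  have hsmono : Monotone s := by
    intro m n hmn
    apply Finset.Ioo_subset_Ioo <;> omega
  have hscov : ∀ k : ℤ, ∃ n : ℕ, k ∈ s n := by
    intro k
    exact ⟨(|k| + 1).toNat, by rw [hmem]; omega⟩
  have hstend : Tendsto s atTop atTop := by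
    apply tendsto_atTop_finset_of_monotone hsmono
    intro k
    obtain ⟨n, hn⟩ := hscov k
    exact ⟨n, hn⟩
  have hzx : Tendsto z atTop (nhds x) := by
    have hsum : HasSum (fun k : ℤ => lp.single 2 k ((x : ∀ _ : ℤ, ℂ) k)) x :=
      lp.hasSum_single ENNReal.ofNat_ne_top x
    exact (hsum.comp hstend : _)
  -- key estimate: δ * ‖xn n - z n‖ ≤ ‖L‖ * ‖x - z n‖
  have key : ∀ n : ℕ, δ * ‖xn n - z n‖ ≤ ‖L‖ * ‖x - z n‖ := by
    intro n
    set w : l2Z := xn n - z n with hw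
    have hwk : ∀ k : ℤ, (n : ℤ) ≤ |k| → (w : ∀ _ : ℤ, ℂ) k = 0 := by
      intro k hk
      have h1 := hsupp n k hk
      have h2 : (z n : ∀ _ : ℤ, ℂ) k = 0 := by
        rw [hzk, if_neg]
        rw [hmem]; omega
      simp [hw, lp.coeFn_sub, Pi.sub_apply, h1, h2]
    -- ⟨w, L (xn n) - y⟩ = 0
    have horth : (inner ℂ w (L (xn n) - y) : ℂ) = 0 := by
      apply inner_eq_zero_of_disjoint_support
      intro k
      rcases le_or_gt (n : ℤ) |k| with hk | hk
      · exact Or.inl (hwk k hk)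
      · refine Or.inr ?_
        simp [lp.coeFn_sub, Pi.sub_apply, hsolve n k hk]
    have hinner : (inner ℂ w (L w) : ℂ) = inner ℂ w (L (x - z n)) := by
      have h1 : L w = (L (xn n) - y) + (L x - L (z n)) := by
        rw [hLx]
        simp [hw, map_sub]
      rw [h1, inner_add_right, horth, zero_add, map_sub]
    have hb : (inner ℂ w (L (x - z n)) : ℂ).re ≤ ‖w‖ * (‖L‖ * ‖x - z n‖) := by
      calc (inner ℂ w (L (x - z n)) : ℂ).re ≤ ‖(inner ℂ w (L (x - z n)) : ℂ)‖ :=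
            Complex.re_le_norm _
        _ ≤ ‖w‖ * ‖L (x - z n)‖ := norm_inner_le_norm _ _
        _ ≤ ‖w‖ * (‖L‖ * ‖x - z n‖) := by
            gcongr
            exact L.le_opNorm _
    have hmain : δ * ‖w‖ ^ 2 ≤ ‖w‖ * (‖L‖ * ‖x - z n‖) := by
      calc δ * ‖w‖ ^ 2 ≤ (inner ℂ w (L w) : ℂ).re := hL_pd w
        _ = (inner ℂ w (L (x - z n)) : ℂ).re := by rw [hinner]
        _ ≤ ‖w‖ * (‖L‖ * ‖x - z n‖) := hb
    rcases eq_or_lt_of_le (norm_nonneg w) with h0 | h0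
    · rw [← h0, mul_zero]
      positivity
    · nlinarith [norm_nonneg w]
  -- conclude
  rw [tendsto_iff_norm_sub_tendsto_zero]
  have hbound : ∀ n : ℕ, ‖xn n - x‖ ≤ (‖L‖ / δ + 1) * ‖x - z n‖ := by
    intro n
    have h1 : ‖xn n - z n‖ ≤ ‖L‖ / δ * ‖x - z n‖ := by
      rw [div_mul_eq_mul_div, le_div_iff₀ hδ, mul_comm]
      exact key n
    calc ‖xn n - x‖ = ‖(xn n - z n) + (z n - x)‖ := by abel_nf
      _ ≤ ‖xn n - z n‖ + ‖z n - x‖ := norm_add_le _ _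
      _ ≤ ‖L‖ / δ * ‖x - z n‖ + ‖x - z n‖ := by
          rw [norm_sub_rev (z n)]
          gcongr
      _ = (‖L‖ / δ + 1) * ‖x - z n‖ := by ring
  have hzero : Tendsto (fun n => (‖L‖ / δ + 1) * ‖x - z n‖) atTop (nhds 0) := by
    have : Tendsto (fun n => ‖x - z n‖) atTop (nhds 0) := by
      have := hzx.const_sub x
      rw [sub_self] at this
      exact (tendsto_iff_norm_sub_tendsto_zero.mp hzx).congr (fun n => by
        rw [norm_sub_rev])
    have h2 := this.const_mul (‖L‖ / δ + 1)
    rwa [mul_zero] at h2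
  exact squeeze_zero (fun n => norm_nonneg _) hbound hzero
end

section
/- Let $L$ be a hermitian positive definite biinfinite Toeplitz matrix with entries $L_{kl} = a_{k-l}$ where $|a_k| \le c e^{-\gamma|k|}$, and let $y$ satisfy $|y_k| \le c' e^{-\gamma|k|}$. Let $x = L^{-1}y$ and $x^{(n)} = L_n^{-1}P_n y$. Then there exist $0 < \gamma_1 < \gamma$ and a constant $c_1$ (depending on $\gamma_1$ and the condition number of $L$) such that $\|x - x^{(n)}\|_{\ell^2} \le c_1 e^{-\gamma_1 n}$. -/
open Complex Real Filter

section AuxLemmas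

def shearEquivZ : (ℤ × ℤ) ≃ (ℤ × ℤ) where
  toFun p := (p.1 + p.2, p.2)
  invFun p := (p.1 - p.2, p.2)
  left_inv p := by ext <;> simp
  right_inv p := by ext <;> simp

@[simp] lemma shearEquivZ_apply (p : ℤ × ℤ) : shearEquivZ p = (p.1 + p.2, p.2) := rfl

lemma abs_exp_sub_one_le (s : ℝ) : |Real.exp s - 1| ≤ Real.exp |s| - 1 := by
  rcases le_or_gt 0 s with h | h
  · rw [_root_.abs_of_nonneg h, _root_.abs_of_nonneg (by linarith [Real.one_le_exp h])]
  · have hle : Real.exp s ≤ 1 := by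
      calc Real.exp s ≤ Real.exp 0 := Real.exp_le_exp.mpr h.le
        _ = 1 := Real.exp_zero
    rw [_root_.abs_of_neg h, _root_.abs_of_nonpos (by linarith : Real.exp s - 1 ≤ 0)]
    have h2 := Real.one_le_cosh s
    rw [Real.cosh_eq] at h2
    linarith

lemma exp_sub_one_le_mul (t : ℝ) : Real.exp t - 1 ≤ t * Real.exp t := by
  have h := Real.add_one_le_exp (-t)
  have h3 : Real.exp t * Real.exp (-t) = 1 := by rw [← Real.exp_add]; simp
  nlinarith [Real.exp_pos t]

lemma summable_exp_neg_int {s : ℝ} (hs : 0 < s) :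
    Summable (fun k : ℤ => Real.exp (-s * |(k : ℝ)|)) := by
  apply Summable.of_nat_of_neg
  · simpa using Real.summable_pow_mul_exp_neg_nat_mul 0 hs
  · simpa using Real.summable_pow_mul_exp_neg_nat_mul 0 hs

lemma summable_mul_exp_neg_int {s : ℝ} (hs : 0 < s) :
    Summable (fun k : ℤ => |(k : ℝ)| * Real.exp (-s * |(k : ℝ)|)) := by
  apply Summable.of_nat_of_neg
  · simpa using Real.summable_pow_mul_exp_neg_nat_mul 1 hs
  · simpa using Real.summable_pow_mul_exp_neg_nat_mul 1 hs

set_option maxHeartbeats 1000000 in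
lemma conv_l1 {g h : ℤ → ℝ} (hg0 : ∀ m, 0 ≤ g m) (hh0 : ∀ l, 0 ≤ h l)
    (hg : Summable g) (hh : Summable h) :
    Summable (fun k => ∑' l, g (k - l) * h l) ∧
      ∑' k, ∑' l, g (k - l) * h l ≤ (∑' m, g m) * (∑' l, h l) := by
  have hFe : Summable ((fun p : ℤ × ℤ => g (p.1 - p.2) * h p.2) ∘ shearEquivZ) := by
    have heq : ((fun p : ℤ × ℤ => g (p.1 - p.2) * h p.2) ∘ shearEquivZ) =
        fun p : ℤ × ℤ => g p.1 * h p.2 := by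
      funext p; simp
    rw [heq]
    exact hg.mul_of_nonneg hh hg0 hh0
  have hF : Summable (fun p : ℤ × ℤ => g (p.1 - p.2) * h p.2) :=
    shearEquivZ.summable_iff.mp hFe
  have hnn : (0 : ℤ × ℤ → ℝ) ≤ fun p : ℤ × ℤ => g (p.1 - p.2) * h p.2 :=
    fun p => mul_nonneg (hg0 _) (hh0 _)
  obtain ⟨h1, h2⟩ := (summable_prod_of_nonneg hnn).mp hF
  refine ⟨h2, ?_⟩
  have key : ∑' k, ∑' l, g (k - l) * h l = ∑' p : ℤ × ℤ, g (p.1 - p.2) * h p.2 :=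
    (Summable.tsum_prod' (f := fun p : ℤ × ℤ => g (p.1 - p.2) * h p.2) hF h1).symm
  rw [key, ← shearEquivZ.tsum_eq (fun p : ℤ × ℤ => g (p.1 - p.2) * h p.2)]
  have heq2 : (fun p : ℤ × ℤ => g ((shearEquivZ p).1 - (shearEquivZ p).2) * h (shearEquivZ p).2) =
      fun p : ℤ × ℤ => g p.1 * h p.2 := by
    funext p; simp
  calc ∑' p : ℤ × ℤ, g ((shearEquivZ p).1 - (shearEquivZ p).2) * h (shearEquivZ p).2
      = ∑' p : ℤ × ℤ, g p.1 * h p.2 := by rw [heq2]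
    _ = ∑' m, ∑' l, g m * h l := Summable.tsum_prod' (f := fun p : ℤ × ℤ => g p.1 * h p.2)
        (hg.mul_of_nonneg hh hg0 hh0) (fun b => hh.mul_left (g b))
    _ = (∑' m, g m) * (∑' l, h l) := by
        simp_rw [tsum_mul_left]; exact tsum_mul_right
    _ ≤ (∑' m, g m) * (∑' l, h l) := le_rfl

lemma l2Z_summable_sq (v : l2Z) : Summable fun k : ℤ => ‖(v : ∀ _ : ℤ, ℂ) k‖ ^ 2 := by
  have h := (lp.memℓp v).summable (p := 2) (by norm_num)
  refine h.congr fun k => ?_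
  norm_num

lemma l2Z_norm_sq (v : l2Z) : ‖v‖ ^ 2 = ∑' k : ℤ, ‖(v : ∀ _ : ℤ, ℂ) k‖ ^ 2 := by
  have h := lp.norm_rpow_eq_tsum (p := 2) (by norm_num) v
  norm_num at h
  exact h

lemma memℓp_of_bound (v : l2Z) (C : ℝ) (f : ∀ _ : ℤ, ℂ)
    (hf : ∀ k, ‖f k‖ ≤ C * ‖(v : ∀ _ : ℤ, ℂ) k‖) : Memℓp f 2 := by
  apply memℓp_gen
  have hsum : Summable fun k : ℤ => C ^ 2 * ‖(v : ∀ _ : ℤ, ℂ) k‖ ^ 2 :=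
    (l2Z_summable_sq v).mul_left _
  have h2 : Summable fun k : ℤ => ‖f k‖ ^ (2 : ℕ) := by
    refine hsum.of_nonneg_of_le (fun k => by positivity) (fun k => ?_)
    calc ‖f k‖ ^ 2 ≤ (C * ‖(v : ∀ _ : ℤ, ℂ) k‖) ^ 2 :=
          pow_le_pow_left₀ (norm_nonneg _) (hf k) 2
      _ = C ^ 2 * ‖(v : ∀ _ : ℤ, ℂ) k‖ ^ 2 := by ring
  refine h2.congr fun k => ?_
  norm_num

lemma choose_params (c γ δ : ℝ) (hc : 0 < c) (hγ : 0 < γ) (hδ : 0 < δ) :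
    ∃ (θ : ℝ) (g : ℤ → ℝ), 0 < θ ∧ θ < γ ∧ (∀ m : ℤ, 0 ≤ g m) ∧ Summable g ∧
      (∀ m : ℤ, c * Real.exp (-γ * |(m:ℝ)|) * (Real.exp (θ * |(m:ℝ)|) - 1) ≤ g m) ∧
      (∑' m : ℤ, g m) ≤ δ / 2 := by
  have hγ2 : 0 < γ / 2 := by linarith
  have hK : Summable (fun m : ℤ => |(m : ℝ)| * Real.exp (-(γ/2) * |(m : ℝ)|)) :=
    summable_mul_exp_neg_int hγ2
  set K := ∑' m : ℤ, |(m : ℝ)| * Real.exp (-(γ/2) * |(m : ℝ)|) with hKdef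
  have hK0 : 0 ≤ K := tsum_nonneg fun m => by positivity
  set θ := min (γ/2) (δ / (2 * c * (K + 1))) with hθdef
  have hθpos : 0 < θ := lt_min hγ2 (by positivity)
  have hθhalf : θ ≤ γ / 2 := min_le_left _ _
  have hθγ : θ < γ := lt_of_le_of_lt hθhalf (by linarith)
  refine ⟨θ, fun m => c * θ * (|(m : ℝ)| * Real.exp (-(γ/2) * |(m : ℝ)|)), hθpos, hθγ,
    fun m => by positivity, hK.mul_left (c * θ), ?_, ?_⟩
  · intro m
    have h1 : Real.exp (θ * |(m : ℝ)|) - 1 ≤ θ * |(m : ℝ)| * Real.exp (θ * |(m : ℝ)|) :=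
      exp_sub_one_le_mul _
    have h2 : (0:ℝ) ≤ c * Real.exp (-γ * |(m : ℝ)|) := by positivity
    calc c * Real.exp (-γ * |(m : ℝ)|) * (Real.exp (θ * |(m : ℝ)|) - 1)
        ≤ c * Real.exp (-γ * |(m : ℝ)|) * (θ * |(m : ℝ)| * Real.exp (θ * |(m : ℝ)|)) :=
          mul_le_mul_of_nonneg_left h1 h2
      _ = c * θ * (|(m : ℝ)| * Real.exp (-γ * |(m : ℝ)| + θ * |(m : ℝ)|)) := by
          rw [Real.exp_add]; ring
      _ ≤ c * θ * (|(m : ℝ)| * Real.exp (-(γ/2) * |(m : ℝ)|)) := by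
          have h3 : -γ * |(m : ℝ)| + θ * |(m : ℝ)| ≤ -(γ/2) * |(m : ℝ)| := by
            have h6 := abs_nonneg (m : ℝ)
            nlinarith
          have h4 := Real.exp_le_exp.mpr h3
          have h5 : (0:ℝ) ≤ c * θ := by positivity
          have h6 := abs_nonneg (m : ℝ)
          exact mul_le_mul_of_nonneg_left (mul_le_mul_of_nonneg_left h4 h6) h5
  · rw [tsum_mul_left]
    have h3 : θ ≤ δ / (2 * c * (K + 1)) := min_le_right _ _
    have h5 : c * θ * (K + 1) ≤ c * (δ / (2 * c * (K + 1))) * (K + 1) :=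
      mul_le_mul_of_nonneg_right (mul_le_mul_of_nonneg_left h3 hc.le) (by linarith)
    have h6 : c * (δ / (2 * c * (K + 1))) * (K + 1) = δ / 2 := by
      field_simp
    nlinarith [mul_pos hc hθpos]

set_option maxHeartbeats 1000000 in
lemma core_estimate (δ : ℝ) (hδ : 0 < δ) (g Z b F : ℤ → ℝ)
    (hg0 : ∀ m, 0 ≤ g m) (hgsum : Summable g) (hGle : (∑' m, g m) ≤ δ / 2)
    (hZ0 : ∀ k, 0 ≤ Z k)
    (hZsq : Summable fun k => Z k ^ 2) (hbsq : Summable fun k => b k ^ 2)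
    (hFsum : Summable F)
    (hFle : ∀ k, F k ≤ Z k * b k + Z k * ∑' l, g (k - l) * Z l)
    (hlow : δ * (∑' k, Z k ^ 2) ≤ ∑' k, F k) :
    ∑' k, Z k ^ 2 ≤ 4 * (∑' k, b k ^ 2) / δ ^ 2 := by
  have hP0 : 0 ≤ ∑' k, Z k ^ 2 := tsum_nonneg fun k => sq_nonneg _
  have hB0 : 0 ≤ ∑' k, b k ^ 2 := tsum_nonneg fun k => sq_nonneg _
  have hG0 : 0 ≤ ∑' m, g m := tsum_nonneg hg0
  have hZbd : ∀ l, Z l ≤ Real.sqrt (∑' k, Z k ^ 2) := by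
    intro l
    have h1 : Z l ^ 2 ≤ ∑' k, Z k ^ 2 := Summable.le_tsum hZsq l fun j _ => sq_nonneg _
    calc Z l = Real.sqrt (Z l ^ 2) := (Real.sqrt_sq (hZ0 l)).symm
      _ ≤ Real.sqrt (∑' k, Z k ^ 2) := Real.sqrt_le_sqrt h1
  have hgsh : ∀ k : ℤ, Summable fun l => g (k - l) := by
    intro k
    exact ((Equiv.subLeft k).summable_iff (f := g)).mpr hgsum
  have hgshsum : ∀ k : ℤ, (∑' l, g (k - l)) = ∑' m, g m := by
    intro k
    exact (Equiv.subLeft k).tsum_eq g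
  have hgZ : ∀ k : ℤ, Summable fun l => g (k - l) * Z l := by
    intro k
    refine Summable.of_nonneg_of_le (fun l => mul_nonneg (hg0 _) (hZ0 _))
      (fun l => ?_) ((hgsh k).mul_right (Real.sqrt (∑' k, Z k ^ 2)))
    exact mul_le_mul_of_nonneg_left (hZbd l) (hg0 _)
  have hgZsq : ∀ k : ℤ, Summable fun l => g (k - l) * Z l ^ 2 := by
    intro k
    refine Summable.of_nonneg_of_le (fun l => mul_nonneg (hg0 _) (sq_nonneg _))
      (fun l => ?_) ((hgsh k).mul_right (∑' k, Z k ^ 2))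
    refine mul_le_mul_of_nonneg_left (Summable.le_tsum hZsq l fun j _ => sq_nonneg _) (hg0 _)
  have hconv := conv_l1 hg0 (fun l => sq_nonneg (Z l)) hgsum hZsq
  have hsplit : ∀ k : ℤ, (∑' l, g (k - l) * ((Z k ^ 2 + Z l ^ 2) / 2)) =
      (∑' m, g m) * (Z k ^ 2 / 2) + (∑' l, g (k - l) * Z l ^ 2) / 2 := by
    intro k
    have e1 : ∀ l : ℤ, g (k - l) * ((Z k ^ 2 + Z l ^ 2) / 2) =
        g (k - l) * (Z k ^ 2 / 2) + g (k - l) * Z l ^ 2 / 2 := fun l => by ring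
    rw [tsum_congr e1, Summable.tsum_add ((hgsh k).mul_right _) ((hgZsq k).div_const 2),
      tsum_mul_right, hgshsum k, tsum_div_const]
  have hFle2 : ∀ k, F k ≤ (δ/4) * Z k ^ 2 + (1/δ) * b k ^ 2 +
      ((∑' m, g m) * (Z k ^ 2 / 2) + (∑' l, g (k - l) * Z l ^ 2) / 2) := by
    intro k
    have h1 : Z k * b k ≤ (δ/4) * Z k ^ 2 + (1/δ) * b k ^ 2 := by
      have hs := sq_nonneg (δ * Z k - 2 * b k)
      have h2 : (δ/4 * Z k ^ 2 + 1/δ * b k ^ 2 - Z k * b k) * (4 * δ) =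
          (δ * Z k - 2 * b k) ^ 2 + (4/δ*δ - 4) * b k ^ 2 := by ring
      have h3 : 4/δ*δ - 4 = 0 := by field_simp; norm_num
      have h4 : 0 ≤ (δ/4 * Z k ^ 2 + 1/δ * b k ^ 2 - Z k * b k) * (4 * δ) := by
        rw [h2, h3]; simpa using hs
      nlinarith [hδ]
    have h2 : Z k * (∑' l, g (k - l) * Z l) ≤ ∑' l, g (k - l) * ((Z k ^ 2 + Z l ^ 2) / 2) := by
      rw [← tsum_mul_left]
      refine Summable.tsum_le_tsum (fun l => ?_) ((hgZ k).mul_left (Z k)) ?_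
      · nlinarith [sq_nonneg (Z k - Z l), hg0 (k - l), hZ0 k, hZ0 l]
      · refine Summable.of_nonneg_of_le
          (fun l => mul_nonneg (hg0 _) (by positivity)) (fun l => ?_)
          ((hgsh k).mul_right ((Z k ^ 2 + ∑' k, Z k ^ 2) / 2))
        have := Summable.le_tsum hZsq l fun j _ => sq_nonneg _
        have hg := hg0 (k - l)
        nlinarith
    calc F k ≤ Z k * b k + Z k * ∑' l, g (k - l) * Z l := hFle k
      _ ≤ (δ/4) * Z k ^ 2 + (1/δ) * b k ^ 2 + ∑' l, g (k - l) * ((Z k ^ 2 + Z l ^ 2) / 2) := by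
          linarith
      _ = _ := by rw [hsplit k]
  have hRHSsum : Summable (fun k => (δ/4) * Z k ^ 2 + (1/δ) * b k ^ 2 +
      ((∑' m, g m) * (Z k ^ 2 / 2) + (∑' l, g (k - l) * Z l ^ 2) / 2)) := by
    refine Summable.add (Summable.add (hZsq.mul_left _) (hbsq.mul_left _)) (Summable.add ?_ ?_)
    · exact (hZsq.div_const 2).mul_left _
    · exact hconv.1.div_const 2
  have hsum_le : ∑' k, F k ≤ ∑' k, ((δ/4) * Z k ^ 2 + (1/δ) * b k ^ 2 +
      ((∑' m, g m) * (Z k ^ 2 / 2) + (∑' l, g (k - l) * Z l ^ 2) / 2)) :=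
    Summable.tsum_le_tsum hFle2 hFsum hRHSsum
  have hsplitsum : ∑' k, ((δ/4) * Z k ^ 2 + (1/δ) * b k ^ 2 +
      ((∑' m, g m) * (Z k ^ 2 / 2) + (∑' l, g (k - l) * Z l ^ 2) / 2)) =
      (δ/4) * (∑' k, Z k ^ 2) + (1/δ) * (∑' k, b k ^ 2) +
      ((∑' m, g m) * ((∑' k, Z k ^ 2) / 2) + (∑' k, ∑' l, g (k - l) * Z l ^ 2) / 2) := by
    rw [Summable.tsum_add (Summable.add (hZsq.mul_left _) (hbsq.mul_left _))
      (Summable.add ((hZsq.div_const 2).mul_left _) (hconv.1.div_const 2)),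
      Summable.tsum_add (hZsq.mul_left _) (hbsq.mul_left _),
      Summable.tsum_add ((hZsq.div_const 2).mul_left _) (hconv.1.div_const 2),
      tsum_mul_left, tsum_mul_left, tsum_mul_left, tsum_div_const, tsum_div_const]
  have hGP : (∑' m, g m) * ((∑' k, Z k ^ 2) / 2) + (∑' k, ∑' l, g (k - l) * Z l ^ 2) / 2 ≤
      (δ/2) * (∑' k, Z k ^ 2) := by
    have h1 := hconv.2
    have h2 : (∑' m, g m) * (∑' k, Z k ^ 2) ≤ (δ/2) * (∑' k, Z k ^ 2) :=
      mul_le_mul_of_nonneg_right hGle hP0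
    nlinarith
  have hkey : (δ/4) * (∑' k, Z k ^ 2) ≤ (1/δ) * (∑' k, b k ^ 2) := by
    have := hlow.trans (hsum_le.trans_eq hsplitsum)
    linarith
  rw [le_div_iff₀ (by positivity : (0:ℝ) < δ ^ 2)]
  have h2 : (δ/4) * (∑' k, Z k ^ 2) * (4 * δ) ≤ (1/δ) * (∑' k, b k ^ 2) * (4 * δ) :=
    mul_le_mul_of_nonneg_right hkey (by positivity)
  have h3 : (δ/4) * (∑' k, Z k ^ 2) * (4 * δ) = (∑' k, Z k ^ 2) * δ ^ 2 := by ring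
  have h4 : (1/δ) * (∑' k, b k ^ 2) * (4 * δ) = 4 * (∑' k, b k ^ 2) := by
    field_simp
  linarith

lemma weight_props (θ : ℝ) (hθpos : 0 < θ) (N : ℝ) :
    ∃ w : ℤ → ℝ,
      (∀ k, 0 < w k) ∧
      (∀ k, w k ≤ Real.exp (θ * |(k : ℝ)|)) ∧
      (∀ k, w k ≤ Real.exp (θ * N)) ∧
      (∀ k l : ℤ, |w k - w l| ≤ w l * (Real.exp (θ * |((k - l : ℤ) : ℝ)|) - 1)) ∧
      (∀ k : ℤ, N ≤ |(k : ℝ)| → w k = Real.exp (θ * N)) := by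
  refine ⟨fun k => Real.exp (θ * min |(k : ℝ)| N), fun k => Real.exp_pos _,
    fun k => Real.exp_le_exp.mpr (mul_le_mul_of_nonneg_left (min_le_left _ _) hθpos.le),
    fun k => Real.exp_le_exp.mpr (mul_le_mul_of_nonneg_left (min_le_right _ _) hθpos.le),
    ?_, ?_⟩
  · intro k l
    have hcast : ((k - l : ℤ) : ℝ) = (k : ℝ) - (l : ℝ) := by push_cast; ring
    have habs1 : |(k : ℝ)| - |(l : ℝ)| ≤ |((k - l : ℤ) : ℝ)| := by
      rw [hcast]; exact abs_sub_abs_le_abs_sub _ _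
    have habs2 : |(l : ℝ)| - |(k : ℝ)| ≤ |((k - l : ℤ) : ℝ)| := by
      rw [hcast, abs_sub_comm]; exact abs_sub_abs_le_abs_sub _ _
    have hd : |min |(k : ℝ)| N - min |(l : ℝ)| N| ≤ |((k - l : ℤ) : ℝ)| := by
      rw [abs_sub_le_iff]
      constructor <;>
      · rcases min_cases |(k : ℝ)| N with ⟨h1, h2⟩ | ⟨h1, h2⟩ <;>
          rcases min_cases |(l : ℝ)| N with ⟨h3, h4⟩ | ⟨h3, h4⟩ <;>
          simp only [h1, h3] <;>
          first
            | linarith [abs_nonneg ((k - l : ℤ) : ℝ)]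
            | linarith
    show |Real.exp (θ * min |(k : ℝ)| N) - Real.exp (θ * min |(l : ℝ)| N)| ≤
      Real.exp (θ * min |(l : ℝ)| N) * (Real.exp (θ * |((k - l : ℤ) : ℝ)|) - 1)
    have hwk : Real.exp (θ * min |(k : ℝ)| N) = Real.exp (θ * min |(l : ℝ)| N) *
        Real.exp (θ * (min |(k : ℝ)| N - min |(l : ℝ)| N)) := by
      rw [← Real.exp_add]; congr 1; ring
    have heq : Real.exp (θ * min |(l : ℝ)| N) *
        Real.exp (θ * (min |(k : ℝ)| N - min |(l : ℝ)| N)) -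
        Real.exp (θ * min |(l : ℝ)| N) = Real.exp (θ * min |(l : ℝ)| N) *
        (Real.exp (θ * (min |(k : ℝ)| N - min |(l : ℝ)| N)) - 1) := by ring
    rw [hwk, heq, abs_mul, abs_of_pos (Real.exp_pos _)]
    have h5 : |θ * (min |(k : ℝ)| N - min |(l : ℝ)| N)| ≤ θ * |((k - l : ℤ) : ℝ)| := by
      rw [abs_mul, abs_of_pos hθpos]
      exact mul_le_mul_of_nonneg_left hd hθpos.le
    have h6 := Real.exp_le_exp.mpr h5
    have h7 := abs_exp_sub_one_le (θ * (min |(k : ℝ)| N - min |(l : ℝ)| N))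
    have h8 : |Real.exp (θ * (min |(k : ℝ)| N - min |(l : ℝ)| N)) - 1| ≤
        Real.exp (θ * |((k - l : ℤ) : ℝ)|) - 1 := by linarith
    exact mul_le_mul_of_nonneg_left h8 (Real.exp_pos _).le
  · intro k hk
    show Real.exp (θ * min |(k : ℝ)| N) = Real.exp (θ * N)
    rw [min_eq_right hk]

end AuxLemmas

set_option maxHeartbeats 2000000 in
theorem finite_section_exponential_rate
    (a : ℤ → ℂ) (c c' γ : ℝ) (hc : 0 < c) (hc' : 0 < c') (hγ : 0 < γ)
    (ha : ∀ k : ℤ, ‖a k‖ ≤ c * Real.exp (-γ * |(k:ℝ)|))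
    (L : l2Z →L[ℂ] l2Z) (hL_sa : IsSelfAdjoint L)
    (e : ℤ → l2Z) (he : ∀ k : ℤ, e k = lp.single 2 k 1)
    (hToep : ∀ k l : ℤ, (inner ℂ (e k) (L (e l)) : ℂ) = a (k - l))
    (δ : ℝ) (hδ : 0 < δ)
    (hL_pd : ∀ x : l2Z, δ * ‖x‖ ^ 2 ≤ (inner ℂ x (L x) : ℂ).re)
    (Linv : l2Z →L[ℂ] l2Z)
    (hLinv₁ : L.comp Linv = ContinuousLinearMap.id ℂ l2Z)
    (hLinv₂ : Linv.comp L = ContinuousLinearMap.id ℂ l2Z)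
    (y : l2Z)
    (hy : ∀ k : ℤ, ‖(y : ∀ _ : ℤ, ℂ) k‖ ≤ c' * Real.exp (-γ * |(k:ℝ)|))
    (xn : ℕ → l2Z)
    (hsupp : ∀ (n : ℕ) (k : ℤ), (n : ℤ) ≤ |k| → (xn n : ∀ _ : ℤ, ℂ) k = 0)
    (hsolve : ∀ (n : ℕ) (k : ℤ), |k| < (n : ℤ) →
      (L (xn n) : ∀ _ : ℤ, ℂ) k = (y : ∀ _ : ℤ, ℂ) k) :
    ∃ γ₁, 0 < γ₁ ∧ γ₁ < γ ∧ ∃ c₁ > 0, ∀ n : ℕ,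
      ‖Linv y - xn n‖ ≤ c₁ * Real.exp (-γ₁ * n) := by
  -- basic operator facts
  have hsa : ∀ u v : l2Z, (inner ℂ (L u) v : ℂ) = inner ℂ u (L v) := by
    intro u v
    conv_lhs => rw [← hL_sa.adjoint_eq]
    exact ContinuousLinearMap.adjoint_inner_left L v u
  have hcoord : ∀ (v : l2Z) (k : ℤ), (v : ∀ _ : ℤ, ℂ) k = (inner ℂ (e k) v : ℂ) := by
    intro v k
    rw [he k, lp.inner_single_left]
    simp [RCLike.inner_apply']
  have herm : ∀ m : ℤ, (starRingEnd ℂ) (a m) = a (-m) := by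
    intro m
    have h1 : (inner ℂ (e 0) (L (e (-m))) : ℂ) = a m := by simpa using hToep 0 (-m)
    have h2 : (inner ℂ (e (-m)) (L (e 0)) : ℂ) = a (-m) := by simpa using hToep (-m) 0
    calc (starRingEnd ℂ) (a m) = (starRingEnd ℂ) (inner ℂ (e 0) (L (e (-m))) : ℂ) := by rw [h1]
      _ = (inner ℂ (L (e (-m))) (e 0) : ℂ) := inner_conj_symm _ _
      _ = (inner ℂ (e (-m)) (L (e 0)) : ℂ) := hsa _ _
      _ = a (-m) := h2
  set x : l2Z := Linv y with hxdef
  have hLx : L x = y := by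
    have := congrArg (fun T : l2Z →L[ℂ] l2Z => T y) hLinv₁
    simpa using this
  have hLcoord : ∀ (v : l2Z) (k : ℤ),
      (L v : ∀ _ : ℤ, ℂ) k = ∑' l, a (k - l) * (v : ∀ _ : ℤ, ℂ) l := by
    intro v k
    rw [hcoord (L v) k, ← hsa (e k) v, lp.inner_eq_tsum]
    refine tsum_congr fun l => ?_
    rw [RCLike.inner_apply']
    have h3 : ((L (e k)) : ∀ _ : ℤ, ℂ) l = a (l - k) := by
      rw [hcoord (L (e k)) l, hToep]
    rw [h3, herm, neg_sub]
  have hLsum : ∀ (v : l2Z) (k : ℤ),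
      Summable fun l : ℤ => a (k - l) * (v : ∀ _ : ℤ, ℂ) l := by
    intro v k
    have h := lp.summable_inner (𝕜 := ℂ) (L (e k)) v
    refine h.congr fun l => ?_
    rw [RCLike.inner_apply']
    have h3 : ((L (e k)) : ∀ _ : ℤ, ℂ) l = a (l - k) := by
      rw [hcoord (L (e k)) l, hToep]
    rw [h3, herm, neg_sub]
  -- parameters
  obtain ⟨θ, g, hθpos, hθγ, hg0, hgsum, hgbound, hGle⟩ := choose_params c γ δ hc hγ hδ
  have hQs : Summable (fun k : ℤ => Real.exp (-(2*(γ-θ)) * |(k : ℝ)|)) :=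
    summable_exp_neg_int (by linarith)
  have hQ0 : 0 ≤ ∑' k : ℤ, Real.exp (-(2*(γ-θ)) * |(k : ℝ)|) :=
    tsum_nonneg fun k => by positivity
  refine ⟨θ, hθpos, hθγ,
    ‖L‖ / δ * Real.sqrt (4 * (∑' k : ℤ, (c' * Real.exp (-(γ-θ) * |(k : ℝ)|)) ^ 2) / δ^2) + 1,
    by positivity, ?_⟩
  intro n
  -- weights
  obtain ⟨w, hw_pos, hw_exp, hw_N, hw_ratio, hw_tail⟩ := weight_props θ hθpos (n : ℝ)
  -- weighted vector z
  have hzmem : Memℓp (fun k : ℤ => ((w k : ℝ) : ℂ) * (x : ∀ _ : ℤ, ℂ) k) 2 := by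
    refine memℓp_of_bound x (Real.exp (θ * (n : ℝ))) _ (fun k => ?_)
    rw [norm_mul, Complex.norm_real, Real.norm_eq_abs, abs_of_pos (hw_pos k)]
    exact mul_le_mul_of_nonneg_right (hw_N k) (norm_nonneg _)
  set z : l2Z := (⟨fun k : ℤ => ((w k : ℝ) : ℂ) * (x : ∀ _ : ℤ, ℂ) k, hzmem⟩ : l2Z) with hzdef
  have hzk : ∀ k : ℤ, (z : ∀ _ : ℤ, ℂ) k = ((w k : ℝ) : ℂ) * (x : ∀ _ : ℤ, ℂ) k :=
    fun k => rfl
  have hznorm : ∀ k : ℤ, ‖(z : ∀ _ : ℤ, ℂ) k‖ = w k * ‖(x : ∀ _ : ℤ, ℂ) k‖ := by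
    intro k
    rw [hzk, norm_mul, Complex.norm_real, Real.norm_eq_abs, abs_of_pos (hw_pos k)]
  -- summability of weighted squares
  have hZsq : Summable fun k : ℤ => (w k * ‖(x : ∀ _ : ℤ, ℂ) k‖) ^ 2 :=
    (l2Z_summable_sq z).congr fun k => by rw [hznorm]
  have hy' : ∀ k : ℤ, ‖(y : ∀ _ : ℤ, ℂ) k‖ ≤ c' * Real.exp (-γ * |(k:ℝ)|) := by
    intro k
    exact hy k
  have hwy_le : ∀ k : ℤ, w k * ‖(y : ∀ _ : ℤ, ℂ) k‖ ≤ c' * Real.exp (-(γ-θ) * |(k : ℝ)|) := by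
    intro k
    have h1 : w k * ‖(y : ∀ _ : ℤ, ℂ) k‖ ≤
        Real.exp (θ * |(k:ℝ)|) * (c' * Real.exp (-γ * |(k:ℝ)|)) :=
      mul_le_mul (hw_exp k) (hy' k) (norm_nonneg _) (Real.exp_nonneg _)
    have h2 : Real.exp (θ * |(k:ℝ)|) * (c' * Real.exp (-γ * |(k:ℝ)|)) =
        c' * Real.exp (-(γ-θ) * |(k:ℝ)|) := by
      rw [mul_left_comm, ← Real.exp_add]
      congr 2
      ring
    linarith
  have hbsq : Summable fun k : ℤ => (w k * ‖(y : ∀ _ : ℤ, ℂ) k‖) ^ 2 := by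
    refine Summable.of_nonneg_of_le (fun k => sq_nonneg _) (fun k => ?_)
      (hQs.mul_left (c' ^ 2))
    have h1 : (w k * ‖(y : ∀ _ : ℤ, ℂ) k‖) ^ 2 ≤ (c' * Real.exp (-(γ-θ) * |(k : ℝ)|)) ^ 2 :=
      pow_le_pow_left₀ (mul_nonneg (hw_pos k).le (norm_nonneg _)) (hwy_le k) 2
    have h2 : (c' * Real.exp (-(γ-θ) * |(k : ℝ)|)) ^ 2 =
        c' ^ 2 * Real.exp (-(2*(γ-θ)) * |(k : ℝ)|) := by
      rw [mul_pow, sq (Real.exp _), ← Real.exp_add]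
      congr 2
      ring
    linarith
  -- the shifted summable facts
  have hgsh : ∀ k : ℤ, Summable fun l => g (k - l) :=
    fun k => ((Equiv.subLeft k).summable_iff (f := g)).mpr hgsum
  have hZle : ∀ l : ℤ, w l * ‖(x : ∀ _ : ℤ, ℂ) l‖ ≤ ‖z‖ := by
    intro l
    rw [← hznorm l]
    exact lp.norm_apply_le_norm (by norm_num) z l
  have hgZsum : ∀ k : ℤ, Summable fun l => g (k - l) * (w l * ‖(x : ∀ _ : ℤ, ℂ) l‖) := by
    intro k
    refine Summable.of_nonneg_of_le
      (fun l => mul_nonneg (hg0 _) (mul_nonneg (hw_pos l).le (norm_nonneg _)))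
      (fun l => mul_le_mul_of_nonneg_left (hZle l) (hg0 _)) ((hgsh k).mul_right ‖z‖)
  -- the commutator bound
  have hE : ∀ k : ℤ, (L z : ∀ _ : ℤ, ℂ) k - ((w k : ℝ) : ℂ) * (y : ∀ _ : ℤ, ℂ) k =
      ∑' l, a (k - l) * (((w l - w k : ℝ)) : ℂ) * (x : ∀ _ : ℤ, ℂ) l := by
    intro k
    have hyk : ((w k : ℝ) : ℂ) * (y : ∀ _ : ℤ, ℂ) k =
        ∑' l, ((w k : ℝ) : ℂ) * (a (k - l) * (x : ∀ _ : ℤ, ℂ) l) := by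
      rw [← hLx, hLcoord x k, tsum_mul_left]
    rw [hLcoord z k, hyk, ← Summable.tsum_sub (hLsum z k) ((hLsum x k).mul_left _)]
    refine tsum_congr fun l => ?_
    rw [hzk]
    push_cast
    ring
  have hEbound : ∀ k : ℤ, ‖(L z : ∀ _ : ℤ, ℂ) k - ((w k : ℝ) : ℂ) * (y : ∀ _ : ℤ, ℂ) k‖ ≤
      ∑' l, g (k - l) * (w l * ‖(x : ∀ _ : ℤ, ℂ) l‖) := by
    intro k
    rw [hE k]
    have hterm : ∀ l : ℤ, ‖a (k - l) * (((w l - w k : ℝ)) : ℂ) * (x : ∀ _ : ℤ, ℂ) l‖ ≤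
        g (k - l) * (w l * ‖(x : ∀ _ : ℤ, ℂ) l‖) := by
      intro l
      rw [norm_mul, norm_mul, Complex.norm_real, Real.norm_eq_abs]
      have h1 : ‖a (k - l)‖ ≤ c * Real.exp (-γ * |((k - l : ℤ) : ℝ)|) := by
        exact ha (k - l)
      have h2 : |w l - w k| ≤ w l * (Real.exp (θ * |((k - l : ℤ) : ℝ)|) - 1) := by
        rw [abs_sub_comm]
        exact hw_ratio k l
      have h3 : 0 ≤ Real.exp (θ * |((k - l : ℤ) : ℝ)|) - 1 := by
        have := Real.one_le_exp (mul_nonneg hθpos.le (abs_nonneg ((k - l : ℤ) : ℝ)))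
        linarith
      calc ‖a (k - l)‖ * |w l - w k| * ‖(x : ∀ _ : ℤ, ℂ) l‖
          ≤ (c * Real.exp (-γ * |((k - l : ℤ) : ℝ)|)) *
            (w l * (Real.exp (θ * |((k - l : ℤ) : ℝ)|) - 1)) * ‖(x : ∀ _ : ℤ, ℂ) l‖ := by
            refine mul_le_mul_of_nonneg_right ?_ (norm_nonneg _)
            exact mul_le_mul h1 h2 (abs_nonneg _) (by positivity)
        _ = (c * Real.exp (-γ * |((k - l : ℤ) : ℝ)|) *
            (Real.exp (θ * |((k - l : ℤ) : ℝ)|) - 1)) * (w l * ‖(x : ∀ _ : ℤ, ℂ) l‖) := by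
            ring
        _ ≤ g (k - l) * (w l * ‖(x : ∀ _ : ℤ, ℂ) l‖) :=
            mul_le_mul_of_nonneg_right (hgbound (k - l))
              (mul_nonneg (hw_pos l).le (norm_nonneg _))
    have hsumnorm : Summable fun l : ℤ =>
        ‖a (k - l) * (((w l - w k : ℝ)) : ℂ) * (x : ∀ _ : ℤ, ℂ) l‖ :=
      Summable.of_nonneg_of_le (fun l => norm_nonneg _) hterm (hgZsum k)
    exact (norm_tsum_le_tsum_norm hsumnorm).trans (Summable.tsum_le_tsum hterm hsumnorm (hgZsum k))
  -- per-coordinate bound feeding the core estimate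
  have hFsum : Summable fun k : ℤ =>
      ((starRingEnd ℂ) ((z : ∀ _ : ℤ, ℂ) k) * ((L z : l2Z) : ∀ _ : ℤ, ℂ) k).re := by
    have h := lp.summable_inner (𝕜 := ℂ) z (L z)
    have h2 : Summable fun k : ℤ =>
        (starRingEnd ℂ) ((z : ∀ _ : ℤ, ℂ) k) * ((L z : l2Z) : ∀ _ : ℤ, ℂ) k :=
      h.congr fun k => by rw [RCLike.inner_apply']
    exact (Complex.hasSum_re h2.hasSum).summable
  have hFle : ∀ k : ℤ,
      ((starRingEnd ℂ) ((z : ∀ _ : ℤ, ℂ) k) * ((L z : l2Z) : ∀ _ : ℤ, ℂ) k).re ≤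
      (w k * ‖(x : ∀ _ : ℤ, ℂ) k‖) * (w k * ‖(y : ∀ _ : ℤ, ℂ) k‖) +
      (w k * ‖(x : ∀ _ : ℤ, ℂ) k‖) *
        ∑' l, g (k - l) * (w l * ‖(x : ∀ _ : ℤ, ℂ) l‖) := by
    intro k
    have h1 : ((starRingEnd ℂ) ((z : ∀ _ : ℤ, ℂ) k) * ((L z : l2Z) : ∀ _ : ℤ, ℂ) k).re ≤
        ‖(z : ∀ _ : ℤ, ℂ) k‖ * ‖((L z : l2Z) : ∀ _ : ℤ, ℂ) k‖ := by
      calc ((starRingEnd ℂ) ((z : ∀ _ : ℤ, ℂ) k) * ((L z : l2Z) : ∀ _ : ℤ, ℂ) k).re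
          ≤ ‖(starRingEnd ℂ) ((z : ∀ _ : ℤ, ℂ) k) *
              ((L z : l2Z) : ∀ _ : ℤ, ℂ) k‖ := Complex.re_le_norm _
        _ = ‖(z : ∀ _ : ℤ, ℂ) k‖ * ‖((L z : l2Z) : ∀ _ : ℤ, ℂ) k‖ := by
            rw [norm_mul, Complex.norm_conj]
    have h2 : ‖((L z : l2Z) : ∀ _ : ℤ, ℂ) k‖ ≤ w k * ‖(y : ∀ _ : ℤ, ℂ) k‖ +
        ∑' l, g (k - l) * (w l * ‖(x : ∀ _ : ℤ, ℂ) l‖) := by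
      have hdec : ((L z : l2Z) : ∀ _ : ℤ, ℂ) k = ((w k : ℝ) : ℂ) * (y : ∀ _ : ℤ, ℂ) k +
          (((L z : l2Z) : ∀ _ : ℤ, ℂ) k - ((w k : ℝ) : ℂ) * (y : ∀ _ : ℤ, ℂ) k) := by
        ring
      calc ‖((L z : l2Z) : ∀ _ : ℤ, ℂ) k‖
          ≤ ‖((w k : ℝ) : ℂ) * (y : ∀ _ : ℤ, ℂ) k‖ +
            ‖((L z : l2Z) : ∀ _ : ℤ, ℂ) k - ((w k : ℝ) : ℂ) * (y : ∀ _ : ℤ, ℂ) k‖ := by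
            conv_lhs => rw [hdec]
            exact norm_add_le _ _
        _ ≤ w k * ‖(y : ∀ _ : ℤ, ℂ) k‖ +
            ∑' l, g (k - l) * (w l * ‖(x : ∀ _ : ℤ, ℂ) l‖) := by
            refine add_le_add ?_ (hEbound k)
            rw [norm_mul, Complex.norm_real, Real.norm_eq_abs, abs_of_pos (hw_pos k)]
    calc ((starRingEnd ℂ) ((z : ∀ _ : ℤ, ℂ) k) * ((L z : l2Z) : ∀ _ : ℤ, ℂ) k).re
        ≤ ‖(z : ∀ _ : ℤ, ℂ) k‖ * ‖((L z : l2Z) : ∀ _ : ℤ, ℂ) k‖ := h1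
      _ = (w k * ‖(x : ∀ _ : ℤ, ℂ) k‖) * ‖((L z : l2Z) : ∀ _ : ℤ, ℂ) k‖ := by rw [hznorm]
      _ ≤ (w k * ‖(x : ∀ _ : ℤ, ℂ) k‖) * (w k * ‖(y : ∀ _ : ℤ, ℂ) k‖ +
            ∑' l, g (k - l) * (w l * ‖(x : ∀ _ : ℤ, ℂ) l‖)) :=
          mul_le_mul_of_nonneg_left h2 (mul_nonneg (hw_pos k).le (norm_nonneg _))
      _ = _ := by ring
  have hlow : δ * (∑' k : ℤ, (w k * ‖(x : ∀ _ : ℤ, ℂ) k‖) ^ 2) ≤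
      ∑' k : ℤ, ((starRingEnd ℂ) ((z : ∀ _ : ℤ, ℂ) k) * ((L z : l2Z) : ∀ _ : ℤ, ℂ) k).re := by
    have h1 : ‖z‖ ^ 2 = ∑' k : ℤ, (w k * ‖(x : ∀ _ : ℤ, ℂ) k‖) ^ 2 := by
      rw [l2Z_norm_sq]
      exact tsum_congr fun k => by rw [hznorm]
    have h2 := hL_pd z
    rw [h1] at h2
    have h3 : (inner ℂ z (L z) : ℂ).re =
        ∑' k : ℤ, ((starRingEnd ℂ) ((z : ∀ _ : ℤ, ℂ) k) * ((L z : l2Z) : ∀ _ : ℤ, ℂ) k).re := by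
      rw [lp.inner_eq_tsum]
      rw [Complex.re_tsum (lp.summable_inner (𝕜 := ℂ) z (L z))]
      exact tsum_congr fun k => by rw [RCLike.inner_apply']
    rw [h3] at h2
    exact h2
  -- apply the core estimate
  have hcore : ∑' k : ℤ, (w k * ‖(x : ∀ _ : ℤ, ℂ) k‖) ^ 2 ≤
      4 * (∑' k : ℤ, (w k * ‖(y : ∀ _ : ℤ, ℂ) k‖) ^ 2) / δ ^ 2 :=
    core_estimate δ hδ g (fun k => w k * ‖(x : ∀ _ : ℤ, ℂ) k‖)
      (fun k => w k * ‖(y : ∀ _ : ℤ, ℂ) k‖) _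
      hg0 hgsum hGle (fun k => mul_nonneg (hw_pos k).le (norm_nonneg _))
      hZsq hbsq hFsum hFle hlow
  have hBle : ∑' k : ℤ, (w k * ‖(y : ∀ _ : ℤ, ℂ) k‖) ^ 2 ≤
      ∑' k : ℤ, (c' * Real.exp (-(γ-θ) * |(k : ℝ)|)) ^ 2 := by
    refine Summable.tsum_le_tsum (fun k => ?_) hbsq ?_
    · exact pow_le_pow_left₀ (mul_nonneg (hw_pos k).le (norm_nonneg _)) (hwy_le k) 2
    · refine Summable.of_nonneg_of_le (fun k => sq_nonneg _) (fun k => le_of_eq ?_)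
        (hQs.mul_left (c' ^ 2))
      rw [mul_pow, sq (Real.exp _), ← Real.exp_add]
      congr 2
      ring
  have hQs2 : Summable fun k : ℤ => (c' * Real.exp (-(γ-θ) * |(k : ℝ)|)) ^ 2 := by
    refine Summable.of_nonneg_of_le (fun k => sq_nonneg _) (fun k => le_of_eq ?_)
      (hQs.mul_left (c' ^ 2))
    rw [mul_pow, sq (Real.exp _), ← Real.exp_add]
    congr 2
    ring
  have hPle : ∑' k : ℤ, (w k * ‖(x : ∀ _ : ℤ, ℂ) k‖) ^ 2 ≤
      4 * (∑' k : ℤ, (c' * Real.exp (-(γ-θ) * |(k : ℝ)|)) ^ 2) / δ ^ 2 := by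
    refine hcore.trans ?_
    gcongr
  -- truncation of x
  have hpmem : Memℓp (fun k : ℤ => if |k| < (n : ℤ) then (x : ∀ _ : ℤ, ℂ) k else 0) 2 := by
    refine memℓp_of_bound x 1 _ (fun k => ?_)
    rw [one_mul]
    split_ifs with h
    · exact le_refl _
    · simp
  set p : l2Z := (⟨fun k : ℤ => if |k| < (n : ℤ) then (x : ∀ _ : ℤ, ℂ) k else 0, hpmem⟩ : l2Z)
    with hpdef
  have hpk : ∀ k : ℤ, (p : ∀ _ : ℤ, ℂ) k =
      if |k| < (n : ℤ) then (x : ∀ _ : ℤ, ℂ) k else 0 := fun k => rfl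
  have hxp : ∀ k : ℤ, ((x - p : l2Z) : ∀ _ : ℤ, ℂ) k =
      (x : ∀ _ : ℤ, ℂ) k - (p : ∀ _ : ℤ, ℂ) k := by
    intro k
    rw [lp.coeFn_sub]
    rfl
  -- tail estimate
  have htail2 : ∀ k : ℤ, ‖((x - p : l2Z) : ∀ _ : ℤ, ℂ) k‖ ^ 2 ≤
      Real.exp (-(2*θ) * (n : ℝ)) * (w k * ‖(x : ∀ _ : ℤ, ℂ) k‖) ^ 2 := by
    intro k
    rw [hxp k, hpk k]
    by_cases hk : |k| < (n : ℤ)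
    · rw [if_pos hk, sub_self, norm_zero]
      simpa using mul_nonneg (Real.exp_nonneg (-(2*θ) * (n : ℝ))) (sq_nonneg (w k * ‖(x : ∀ _ : ℤ, ℂ) k‖))
    · rw [if_neg hk, sub_zero]
      have hkn : (n : ℝ) ≤ |(k : ℝ)| := by
        push_neg at hk
        rw [← Int.cast_abs]
        exact_mod_cast hk
      rw [hw_tail k hkn]
      have hh : Real.exp (-(2*θ) * (n : ℝ)) * Real.exp (θ * (n : ℝ)) ^ 2 = 1 := by
        rw [sq, ← Real.exp_add, ← Real.exp_add,
          show -(2*θ) * (n : ℝ) + (θ * (n : ℝ) + θ * (n : ℝ)) = 0 by ring, Real.exp_zero]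
      calc ‖(x : ∀ _ : ℤ, ℂ) k‖ ^ 2
          = (Real.exp (-(2*θ) * (n : ℝ)) * Real.exp (θ * (n : ℝ)) ^ 2) *
            ‖(x : ∀ _ : ℤ, ℂ) k‖ ^ 2 := by rw [hh, one_mul]
        _ = Real.exp (-(2*θ) * (n : ℝ)) * (Real.exp (θ * (n : ℝ)) * ‖(x : ∀ _ : ℤ, ℂ) k‖) ^ 2 := by
            ring
        _ ≤ Real.exp (-(2*θ) * (n : ℝ)) * (Real.exp (θ * (n : ℝ)) * ‖(x : ∀ _ : ℤ, ℂ) k‖) ^ 2 :=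
            le_rfl
  have htailsum : ‖x - p‖ ^ 2 ≤ Real.exp (-(2*θ) * (n : ℝ)) *
      (4 * (∑' k : ℤ, (c' * Real.exp (-(γ-θ) * |(k : ℝ)|)) ^ 2) / δ ^ 2) := by
    rw [l2Z_norm_sq]
    calc ∑' k : ℤ, ‖((x - p : l2Z) : ∀ _ : ℤ, ℂ) k‖ ^ 2
        ≤ ∑' k : ℤ, Real.exp (-(2*θ) * (n : ℝ)) * (w k * ‖(x : ∀ _ : ℤ, ℂ) k‖) ^ 2 :=
          Summable.tsum_le_tsum htail2 (l2Z_summable_sq _) (hZsq.mul_left _)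
      _ = Real.exp (-(2*θ) * (n : ℝ)) * ∑' k : ℤ, (w k * ‖(x : ∀ _ : ℤ, ℂ) k‖) ^ 2 :=
          tsum_mul_left
      _ ≤ _ := mul_le_mul_of_nonneg_left hPle (Real.exp_nonneg _)
  -- Galerkin orthogonality
  have hu0 : ∀ k : ℤ, |k| < (n : ℤ) → ((L (x - xn n) : l2Z) : ∀ _ : ℤ, ℂ) k = 0 := by
    intro k hk
    have h1 : ((L (x - xn n) : l2Z) : ∀ _ : ℤ, ℂ) k =
        ((L x : l2Z) : ∀ _ : ℤ, ℂ) k - ((L (xn n) : l2Z) : ∀ _ : ℤ, ℂ) k := by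
      rw [map_sub, lp.coeFn_sub]
      rfl
    rw [h1, hsolve n k hk, hLx, sub_self]
  have horth : (inner ℂ (p - xn n) (L (x - xn n)) : ℂ) = 0 := by
    rw [lp.inner_eq_tsum]
    have hzero : ∀ k : ℤ, (inner ℂ (((p - xn n : l2Z) : ∀ _ : ℤ, ℂ) k)
        (((L (x - xn n) : l2Z) : ∀ _ : ℤ, ℂ) k) : ℂ) = 0 := by
      intro k
      rw [RCLike.inner_apply']
      by_cases hk : |k| < (n : ℤ)
      · rw [hu0 k hk, mul_zero]
      · have h2 : ((p - xn n : l2Z) : ∀ _ : ℤ, ℂ) k = 0 := by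
          rw [lp.coeFn_sub, Pi.sub_apply, hpk k, if_neg hk, hsupp n k (by omega), sub_zero]
        rw [h2, map_zero, zero_mul]
    rw [tsum_congr hzero, tsum_zero]
  have hkey2 : (inner ℂ (x - xn n) (L (x - xn n)) : ℂ) = inner ℂ (x - p) (L (x - xn n)) := by
    have hsplit2 : x - xn n = (x - p) + (p - xn n) := by abel
    nth_rewrite 1 [hsplit2]
    rw [inner_add_left, horth, add_zero]
  have hquasi : δ * ‖x - xn n‖ ^ 2 ≤ ‖x - p‖ * (‖L‖ * ‖x - xn n‖) := by
    calc δ * ‖x - xn n‖ ^ 2 ≤ (inner ℂ (x - xn n) (L (x - xn n)) : ℂ).re := hL_pd _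
      _ = (inner ℂ (x - p) (L (x - xn n)) : ℂ).re := by rw [hkey2]
      _ ≤ ‖(inner ℂ (x - p) (L (x - xn n)) : ℂ)‖ := Complex.re_le_norm _
      _ = ‖(inner ℂ (x - p) (L (x - xn n)) : ℂ)‖ := rfl
      _ ≤ ‖x - p‖ * ‖L (x - xn n)‖ := norm_inner_le_norm _ _
      _ ≤ ‖x - p‖ * (‖L‖ * ‖x - xn n‖) :=
          mul_le_mul_of_nonneg_left (L.le_opNorm _) (norm_nonneg _)
  have hfin : ‖x - xn n‖ ≤ ‖L‖ / δ * ‖x - p‖ := by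
    rcases eq_or_lt_of_le (norm_nonneg (x - xn n)) with h0 | h0
    · rw [← h0]
      positivity
    · have h1 : δ * ‖x - xn n‖ * ‖x - xn n‖ ≤ (‖L‖ * ‖x - p‖) * ‖x - xn n‖ := by
        have := hquasi
        nlinarith [norm_nonneg (x - p), norm_nonneg (x - xn n)]
      have h2 : δ * ‖x - xn n‖ ≤ ‖L‖ * ‖x - p‖ := le_of_mul_le_mul_right h1 h0
      rw [div_mul_eq_mul_div, le_div_iff₀ hδ, mul_comm]
      linarith
  -- conclude
  have hA : ‖x - p‖ ≤ Real.exp (-θ * (n : ℝ)) *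
      Real.sqrt (4 * (∑' k : ℤ, (c' * Real.exp (-(γ-θ) * |(k : ℝ)|)) ^ 2) / δ ^ 2) := by
    have hexp2 : Real.exp (-(2*θ) * (n : ℝ)) = (Real.exp (-θ * (n : ℝ))) ^ 2 := by
      rw [sq, ← Real.exp_add]
      congr 1
      ring
    have h1 : ‖x - p‖ ^ 2 ≤ (Real.exp (-θ * (n : ℝ))) ^ 2 *
        (4 * (∑' k : ℤ, (c' * Real.exp (-(γ-θ) * |(k : ℝ)|)) ^ 2) / δ ^ 2) := by
      rw [← hexp2]
      exact htailsum
    have h2 : ‖x - p‖ ≤ Real.sqrt ((Real.exp (-θ * (n : ℝ))) ^ 2 *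
        (4 * (∑' k : ℤ, (c' * Real.exp (-(γ-θ) * |(k : ℝ)|)) ^ 2) / δ ^ 2)) := by
      rw [← Real.sqrt_sq (norm_nonneg (x - p))]
      exact Real.sqrt_le_sqrt h1
    rwa [Real.sqrt_mul (sq_nonneg _), Real.sqrt_sq (Real.exp_nonneg _)] at h2
  have hexp_pos : 0 < Real.exp (-θ * (n : ℝ)) := Real.exp_pos _
  have hsq0 : 0 ≤ Real.sqrt (4 * (∑' k : ℤ, (c' * Real.exp (-(γ-θ) * |(k : ℝ)|)) ^ 2) / δ ^ 2) :=
    Real.sqrt_nonneg _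
  calc ‖x - xn n‖ ≤ ‖L‖ / δ * ‖x - p‖ := hfin
    _ ≤ ‖L‖ / δ * (Real.exp (-θ * (n : ℝ)) *
        Real.sqrt (4 * (∑' k : ℤ, (c' * Real.exp (-(γ-θ) * |(k : ℝ)|)) ^ 2) / δ ^ 2)) :=
        mul_le_mul_of_nonneg_left hA (by positivity)
    _ = (‖L‖ / δ * Real.sqrt (4 * (∑' k : ℤ, (c' * Real.exp (-(γ-θ) * |(k : ℝ)|)) ^ 2) / δ ^ 2)) *
        Real.exp (-θ * (n : ℝ)) := by ring
    _ ≤ (‖L‖ / δ * Real.sqrt (4 * (∑' k : ℤ, (c' * Real.exp (-(γ-θ) * |(k : ℝ)|)) ^ 2) / δ ^ 2)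
          + 1) * Real.exp (-θ * (n : ℝ)) := by
        nlinarith [hexp_pos]
end

section
/- Let $\gamma > \gamma_2 > 0$ and let $B, M$ be $n \times n$ matrices with $|B_{kl}| \le c\, e^{-\gamma(n - |k-l|)}$ and $|M_{kl}| \le c_2\, e^{-\gamma_2 |k-l|}$. Then there is a constant $c_3$ depending only on $c, c_2, \gamma, \gamma_2$ (not on $n$) such that $|(BM)_{kl}| \le c_3\, e^{-\gamma_2(n - |k-l|)}$ for all $0 \le k, l \le n-1$. -/
open Real

theorem corner_decay_product
    (c c₂ γ γ₂ : ℝ) (hc : 0 < c) (hc₂ : 0 < c₂) (hγ₂ : 0 < γ₂) (hγ : γ₂ < γ) :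
    ∃ c₃ > 0, ∀ (n : ℕ) (B M : Matrix (Fin n) (Fin n) ℂ),
      (∀ k l : Fin n, ‖B k l‖ ≤
        c * Real.exp (-γ * ((n : ℝ) - |(k : ℝ) - (l : ℝ)|))) →
      (∀ k l : Fin n, ‖M k l‖ ≤
        c₂ * Real.exp (-γ₂ * |(k : ℝ) - (l : ℝ)|)) →
      ∀ k l : Fin n, ‖(B * M) k l‖ ≤
        c₃ * Real.exp (-γ₂ * ((n : ℝ) - |(k : ℝ) - (l : ℝ)|)) := by
  set δ : ℝ := γ - γ₂ with hδdef
  have hδ : 0 < δ := by simp [hδdef]; linarith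
  set r : ℝ := Real.exp (-δ) with hrdef
  have hr0 : 0 < r := Real.exp_pos _
  have hr1 : r < 1 := by
    rw [hrdef]
    exact Real.exp_lt_one_iff.mpr (by linarith)
  have h1r : 0 < 1 - r := by linarith
  refine ⟨c * c₂ * (2 * (1 - r)⁻¹), by positivity, ?_⟩
  intro n B M hB hM k l
  have hkn : (k : ℝ) + 1 ≤ n := by
    have := k.isLt
    exact_mod_cast Nat.succ_le_of_lt this
  have hln : (l : ℝ) + 1 ≤ n := by
    have := l.isLt
    exact_mod_cast Nat.succ_le_of_lt this
  -- per-term bound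
  have key : ∀ j : Fin n,
      ‖B k j‖ * ‖M j l‖ ≤
      c * c₂ * Real.exp (-γ₂ * ((n : ℝ) - |(k : ℝ) - (l : ℝ)|)) *
        (r ^ ((j : ℕ) + 1) + r ^ (n - (j : ℕ))) := by
    intro j
    have h1 : ‖B k j‖ * ‖M j l‖ ≤
        (c * Real.exp (-γ * ((n : ℝ) - |(k : ℝ) - (j : ℝ)|))) *
        (c₂ * Real.exp (-γ₂ * |(j : ℝ) - (l : ℝ)|)) :=
      mul_le_mul (hB k j) (hM j l) (norm_nonneg _)
        (by positivity)
    refine h1.trans ?_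
    have h2 : Real.exp (-γ * ((n : ℝ) - |(k : ℝ) - (j : ℝ)|)) *
        Real.exp (-γ₂ * |(j : ℝ) - (l : ℝ)|) ≤
        Real.exp (-γ₂ * ((n : ℝ) - |(k : ℝ) - (l : ℝ)|)) *
        Real.exp (-δ * ((n : ℝ) - |(k : ℝ) - (j : ℝ)|)) := by
      rw [← Real.exp_add, ← Real.exp_add, Real.exp_le_exp]
      have htri : |(k : ℝ) - (j : ℝ)| ≤ |(k : ℝ) - (l : ℝ)| + |(j : ℝ) - (l : ℝ)| := by
        have := abs_sub_le ((k : ℝ)) ((l : ℝ)) ((j : ℝ))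
        rwa [abs_sub_comm ((l:ℝ)) ((j:ℝ))] at this
      have := mul_nonneg hγ₂.le (sub_nonneg.mpr htri)
      simp only [hδdef]
      nlinarith
    have h3 : Real.exp (-δ * ((n : ℝ) - |(k : ℝ) - (j : ℝ)|)) ≤
        r ^ ((j : ℕ) + 1) + r ^ (n - (j : ℕ)) := by
      have hjn : (j : ℝ) + 1 ≤ n := by
        have := j.isLt
        exact_mod_cast Nat.succ_le_of_lt this
      rcases le_total ((j : ℝ)) ((k : ℝ)) with hjk | hjk
      · have habs : |(k : ℝ) - (j : ℝ)| = (k : ℝ) - (j : ℝ) :=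
          abs_of_nonneg (by linarith)
        have hle : Real.exp (-δ * ((n : ℝ) - |(k : ℝ) - (j : ℝ)|)) ≤
            Real.exp (-δ * ((j : ℝ) + 1)) := by
          rw [Real.exp_le_exp, habs]
          nlinarith
        have heq : Real.exp (-δ * ((j : ℝ) + 1)) = r ^ ((j : ℕ) + 1) := by
          rw [hrdef, ← Real.exp_nat_mul]
          push_cast
          ring_nf
        have := hle.trans_eq heq
        have hnn : (0:ℝ) ≤ r ^ (n - (j : ℕ)) := by positivity
        linarith
      · have habs : |(k : ℝ) - (j : ℝ)| = (j : ℝ) - (k : ℝ) := by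
          rw [abs_sub_comm]; exact abs_of_nonneg (by linarith)
        have hk0 : (0:ℝ) ≤ (k : ℝ) := Nat.cast_nonneg _
        have hle : Real.exp (-δ * ((n : ℝ) - |(k : ℝ) - (j : ℝ)|)) ≤
            Real.exp (-δ * ((n : ℝ) - (j : ℝ))) := by
          rw [Real.exp_le_exp, habs]
          nlinarith
        have hcast : ((n - (j : ℕ) : ℕ) : ℝ) = (n : ℝ) - (j : ℝ) := by
          have := j.isLt.le
          push_cast [Nat.cast_sub this]
          ring
        have heq : Real.exp (-δ * ((n : ℝ) - (j : ℝ))) = r ^ (n - (j : ℕ)) := by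
          rw [hrdef, ← Real.exp_nat_mul, hcast]
          ring_nf
        have := hle.trans_eq heq
        have hnn : (0:ℝ) ≤ r ^ ((j : ℕ) + 1) := by positivity
        linarith
    calc (c * Real.exp (-γ * ((n : ℝ) - |(k : ℝ) - (j : ℝ)|))) *
        (c₂ * Real.exp (-γ₂ * |(j : ℝ) - (l : ℝ)|))
        = c * c₂ * (Real.exp (-γ * ((n : ℝ) - |(k : ℝ) - (j : ℝ)|)) *
          Real.exp (-γ₂ * |(j : ℝ) - (l : ℝ)|)) := by ring
      _ ≤ c * c₂ * (Real.exp (-γ₂ * ((n : ℝ) - |(k : ℝ) - (l : ℝ)|)) *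
          Real.exp (-δ * ((n : ℝ) - |(k : ℝ) - (j : ℝ)|))) := by
          apply mul_le_mul_of_nonneg_left (by
            exact h2) (by positivity)
      _ ≤ c * c₂ * (Real.exp (-γ₂ * ((n : ℝ) - |(k : ℝ) - (l : ℝ)|)) *
          (r ^ ((j : ℕ) + 1) + r ^ (n - (j : ℕ)))) := by
          apply mul_le_mul_of_nonneg_left ?_ (by positivity)
          exact mul_le_mul_of_nonneg_left h3 (Real.exp_pos _).le
      _ = c * c₂ * Real.exp (-γ₂ * ((n : ℝ) - |(k : ℝ) - (l : ℝ)|)) *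
          (r ^ ((j : ℕ) + 1) + r ^ (n - (j : ℕ))) := by ring
  -- the geometric sums
  have hgeom : ∀ m : ℕ, ∑ i ∈ Finset.range m, r ^ i ≤ (1 - r)⁻¹ := by
    intro m
    rw [geom_sum_eq (ne_of_lt hr1) m, show r ^ m - 1 = -(1 - r ^ m) by ring,
      show r - 1 = -(1 - r) by ring, neg_div_neg_eq]
    rw [div_le_iff₀ h1r]
    have h : (0:ℝ) ≤ r ^ m := by positivity
    have h2 : (1 - r)⁻¹ * (1 - r) = 1 := inv_mul_cancel₀ (ne_of_gt h1r)
    linarith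
  have hsum1 : ∑ j ∈ Finset.range n, r ^ (j + 1) ≤ (1 - r)⁻¹ := by
    refine le_trans ?_ (hgeom n)
    apply Finset.sum_le_sum
    intro i _
    exact pow_le_pow_of_le_one hr0.le hr1.le (Nat.le_succ i)
  have hsum2 : ∑ j ∈ Finset.range n, r ^ (n - j) ≤ (1 - r)⁻¹ := by
    have hrefl := Finset.sum_range_reflect (fun j => r ^ (j + 1)) n
    have heq : ∑ j ∈ Finset.range n, r ^ (n - j) =
        ∑ j ∈ Finset.range n, r ^ (n - 1 - j + 1) := by
      apply Finset.sum_congr rfl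
      intro i hi
      have : i < n := Finset.mem_range.mp hi
      congr 1
      omega
    rw [heq, hrefl]
    exact hsum1
  have hsumtot : ∑ j : Fin n, (r ^ ((j : ℕ) + 1) + r ^ (n - (j : ℕ))) ≤ 2 * (1 - r)⁻¹ := by
    rw [Finset.sum_add_distrib, Fin.sum_univ_eq_sum_range (fun i => r ^ (i + 1)),
      Fin.sum_univ_eq_sum_range (fun i => r ^ (n - i))]
    linarith
  calc ‖(B * M) k l‖
      = ‖∑ j : Fin n, B k j * M j l‖ := by rw [Matrix.mul_apply]
    _ ≤ ∑ j : Fin n, ‖B k j * M j l‖ := norm_sum_le _ _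
    _ = ∑ j : Fin n, ‖B k j‖ * ‖M j l‖ := by
        simp [map_mul]
    _ ≤ ∑ j : Fin n, c * c₂ * Real.exp (-γ₂ * ((n : ℝ) - |(k : ℝ) - (l : ℝ)|)) *
          (r ^ ((j : ℕ) + 1) + r ^ (n - (j : ℕ))) :=
        Finset.sum_le_sum (fun j _ => key j)
    _ = c * c₂ * Real.exp (-γ₂ * ((n : ℝ) - |(k : ℝ) - (l : ℝ)|)) *
          ∑ j : Fin n, (r ^ ((j : ℕ) + 1) + r ^ (n - (j : ℕ))) := by
        rw [← Finset.mul_sum]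
    _ ≤ c * c₂ * Real.exp (-γ₂ * ((n : ℝ) - |(k : ℝ) - (l : ℝ)|)) * (2 * (1 - r)⁻¹) :=
        mul_le_mul_of_nonneg_left hsumtot (by positivity)
    _ = c * c₂ * (2 * (1 - r)⁻¹) * Real.exp (-γ₂ * ((n : ℝ) - |(k : ℝ) - (l : ℝ)|)) := by
        ring
end

section
/- Let $E_n$ be hermitian $n\times n$ matrices whose entries satisfy $|(E_n)_{kl}| \le c\big(e^{-2\gamma n}e^{\gamma(k+l)} + e^{-2\gamma n}e^{\gamma|k-l|} + e^{-\gamma(k+l)}\big)$ for fixed $c, \gamma > 0$. Then for every $\varepsilon > 0$ there exist $N$ and $n_0$ such that for all $n \ge n_0$, at most $4N$ eigenvalues of $E_n$ have absolute value exceeding $\varepsilon$. -/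
open Real Matrix

lemma exp_sq' (u : ℝ) : Real.exp u ^ 2 = Real.exp (2*u) := by
  rw [sq, ← Real.exp_add]; ring_nf

lemma geom_hi (γ : ℝ) (hγ : 0 < γ) (n : ℕ) :
    ∑ k : Fin n, Real.exp (2*γ*(k:ℝ)) ≤ Real.exp (2*γ*n) / (Real.exp (2*γ) - 1) := by
  have hr : (1:ℝ) < Real.exp (2*γ) := by
    rw [show (1:ℝ) = Real.exp 0 by simp]
    exact Real.exp_lt_exp.mpr (by positivity)
  have hk : ∀ k : ℕ, Real.exp (2*γ*(k:ℝ)) = (Real.exp (2*γ))^k := by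
    intro k
    rw [← Real.exp_nat_mul]
    exact congrArg Real.exp (by ring)
  rw [Fin.sum_univ_eq_sum_range (fun m : ℕ => Real.exp (2*γ*(m:ℝ))) n]
  simp_rw [hk]
  rw [geom_sum_eq hr.ne' n]
  have hpow : (Real.exp (2*γ))^n = Real.exp (2*γ*n) := by rw [← Real.exp_nat_mul]; ring_nf
  gcongr
  · linarith

lemma geom_lo (γ : ℝ) (hγ : 0 < γ) (n : ℕ) :
    ∑ k : Fin n, Real.exp (-(2*γ)*(k:ℝ)) ≤ 1 / (1 - Real.exp (-(2*γ))) := by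
  set r := Real.exp (-(2*γ)) with hrdef
  have hr0 : 0 < r := Real.exp_pos _
  have hr1 : r < 1 := by
    rw [hrdef, show (1:ℝ) = Real.exp 0 by simp]
    exact Real.exp_lt_exp.mpr (by linarith)
  have hk : ∀ k : ℕ, Real.exp (-(2*γ)*(k:ℝ)) = r^k := by
    intro k
    rw [hrdef, ← Real.exp_nat_mul]
    exact congrArg Real.exp (by ring)
  rw [Fin.sum_univ_eq_sum_range (fun m : ℕ => Real.exp (-(2*γ)*(m:ℝ))) n]
  simp_rw [hk]
  rw [geom_sum_eq hr1.ne n,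
    show r^n - 1 = -(1 - r^n) by ring, show r - 1 = -(1-r) by ring, neg_div_neg_eq]
  gcongr
  · nlinarith [pow_nonneg hr0.le n]

lemma aux_div (a e d : ℝ) (hd : d ≠ 0) (h : a*e*e = 1) :
    a * (e/d * (e/d)) = (d⁻¹)^2 := by
  field_simp
  linear_combination h

lemma pt_sq (c x y z w : ℝ) (h : w ≤ c*(x+y+z)) (h0 : 0 ≤ w)
    (hx : 0 ≤ x) (hy : 0 ≤ y) (hz : 0 ≤ z) :
    w^2 ≤ 3*c^2*(x^2+y^2+z^2) := by
  nlinarith [mul_nonneg (sq_nonneg c) (sq_nonneg (x-y)),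
    mul_nonneg (sq_nonneg c) (sq_nonneg (x-z)),
    mul_nonneg (sq_nonneg c) (sq_nonneg (y-z)),
    mul_self_le_mul_self h0 h]

lemma frob_bound (c γ : ℝ) (hc : 0 < c) (hγ : 0 < γ) (n : ℕ)
    (A : Matrix (Fin n) (Fin n) ℂ)
    (hb : ∀ k l : Fin n, ‖A k l‖ ≤
      c * (Real.exp (-2 * γ * n) * Real.exp (γ * ((k : ℝ) + (l : ℝ))) +
        Real.exp (-2 * γ * n) * Real.exp (γ * |(k : ℝ) - (l : ℝ)|) +
        Real.exp (-γ * ((k : ℝ) + (l : ℝ))))) :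
    ∑ k, ∑ l, ‖A k l‖ ^ 2 ≤
      3 * c^2 * (((Real.exp (2*γ) - 1)⁻¹)^2 + (γ⁻¹)^2 + ((1 - Real.exp (-(2*γ)))⁻¹)^2) := by
  set t1 : Fin n → Fin n → ℝ := fun k l =>
    Real.exp (-2 * γ * n) * Real.exp (γ * ((k : ℝ) + (l : ℝ))) with ht1def
  set t2 : Fin n → Fin n → ℝ := fun k l =>
    Real.exp (-2 * γ * n) * Real.exp (γ * |(k : ℝ) - (l : ℝ)|) with ht2def
  set t3 : Fin n → Fin n → ℝ := fun k l =>
    Real.exp (-γ * ((k : ℝ) + (l : ℝ))) with ht3def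
  have step1 : ∑ k, ∑ l, ‖A k l‖ ^ 2 ≤
      ∑ k, ∑ l, 3 * c^2 * (t1 k l ^ 2 + t2 k l ^ 2 + t3 k l ^ 2) := by
    apply Finset.sum_le_sum; intro k _
    apply Finset.sum_le_sum; intro l _
    simp only [ht1def, ht2def, ht3def]
    exact pt_sq c _ _ _ _ (hb k l) (norm_nonneg _)
      (by positivity) (by positivity) (by positivity)
  have step2 : ∑ k, ∑ l, 3 * c^2 * (t1 k l ^ 2 + t2 k l ^ 2 + t3 k l ^ 2) =
      3 * c^2 * ((∑ k, ∑ l, t1 k l ^ 2) + (∑ k, ∑ l, t2 k l ^ 2) + (∑ k, ∑ l, t3 k l ^ 2)) := by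
    simp only [← Finset.mul_sum, Finset.sum_add_distrib]
  -- Bound S1
  have hS1 : (∑ k : Fin n, ∑ l : Fin n, t1 k l ^ 2) ≤ ((Real.exp (2*γ) - 1)⁻¹)^2 := by
    have hd : (0:ℝ) < Real.exp (2*γ) - 1 := by
      have : (1:ℝ) < Real.exp (2*γ) := by
        rw [show (1:ℝ) = Real.exp 0 by simp]; exact Real.exp_lt_exp.mpr (by positivity)
      linarith
    have ht1 : ∀ k l : Fin n, t1 k l ^ 2 =
        Real.exp (-4*γ*n) * (Real.exp (2*γ*(k:ℝ)) * Real.exp (2*γ*(l:ℝ))) := by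
      intro k l
      simp only [ht1def, mul_pow, exp_sq']
      simp only [← Real.exp_add]
      exact congrArg Real.exp (by ring)
    calc (∑ k : Fin n, ∑ l : Fin n, t1 k l ^ 2)
        = Real.exp (-4*γ*n) * ((∑ k : Fin n, Real.exp (2*γ*(k:ℝ))) *
            (∑ l : Fin n, Real.exp (2*γ*(l:ℝ)))) := by
          rw [Finset.sum_mul_sum Finset.univ Finset.univ
            (fun k : Fin n => Real.exp (2*γ*(k:ℝ))) (fun l : Fin n => Real.exp (2*γ*(l:ℝ))),
            Finset.mul_sum]
          refine Finset.sum_congr rfl fun k _ => ?_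
          rw [Finset.mul_sum]
          exact Finset.sum_congr rfl fun l _ => ht1 k l
      _ ≤ Real.exp (-4*γ*n) * ((Real.exp (2*γ*n) / (Real.exp (2*γ) - 1)) *
            (Real.exp (2*γ*n) / (Real.exp (2*γ) - 1))) := by
          have hg := geom_hi γ hγ n
          have hnn : (0:ℝ) ≤ ∑ k : Fin n, Real.exp (2*γ*(k:ℝ)) :=
            Finset.sum_nonneg fun _ _ => (Real.exp_pos _).le
          gcongr
      _ = ((Real.exp (2*γ) - 1)⁻¹)^2 := by
          have hexp : Real.exp (-4*γ*n) * Real.exp (2*γ*n) * Real.exp (2*γ*n) = 1 := by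
            rw [← Real.exp_add, ← Real.exp_add,
              show -4*γ*(n:ℝ) + 2*γ*n + 2*γ*n = 0 by ring, Real.exp_zero]
          exact aux_div _ _ _ (ne_of_gt hd) hexp
  -- Bound S2
  have hS2 : (∑ k : Fin n, ∑ l : Fin n, t2 k l ^ 2) ≤ (γ⁻¹)^2 := by
    have ht2 : ∀ k l : Fin n, t2 k l ^ 2 ≤ Real.exp (-(2*γ*n)) := by
      intro k l
      have habs : |(k : ℝ) - (l : ℝ)| ≤ n := by
        have hk : (k:ℝ) < n := by exact_mod_cast k.isLt
        have hl : (l:ℝ) < n := by exact_mod_cast l.isLt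
        have hk0 : (0:ℝ) ≤ (k:ℝ) := Nat.cast_nonneg _
        have hl0 : (0:ℝ) ≤ (l:ℝ) := Nat.cast_nonneg _
        rw [abs_le]; constructor <;> linarith
      have : t2 k l ^ 2 = Real.exp (-4*γ*n) * Real.exp (2*γ*|(k:ℝ) - (l:ℝ)|) := by
        simp only [ht2def, mul_pow, exp_sq']
        exact congrArg₂ (fun a b => Real.exp a * Real.exp b) (by ring) (by ring)
      rw [this, ← Real.exp_add]
      apply Real.exp_le_exp.mpr
      nlinarith
    calc (∑ k : Fin n, ∑ l : Fin n, t2 k l ^ 2)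
        ≤ ∑ _k : Fin n, ∑ _l : Fin n, Real.exp (-(2*γ*n)) := by
          apply Finset.sum_le_sum; intro k _
          exact Finset.sum_le_sum fun l _ => ht2 k l
      _ = (n:ℝ)^2 * Real.exp (-(2*γ*n)) := by
          simp [Finset.sum_const, nsmul_eq_mul]; ring
      _ ≤ (γ⁻¹)^2 := by
          rw [Real.exp_neg]
          have hy : (0:ℝ) < Real.exp (2*γ*n) := Real.exp_pos _
          rw [show Real.exp (2*γ*(n:ℝ)) = Real.exp (γ*n) ^ 2 by rw [exp_sq']; ring_nf]
          have hle : γ*(n:ℝ) ≤ Real.exp (γ*n) := by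
            linarith [Real.add_one_le_exp (γ*(n:ℝ))]
          have hsq : (γ*(n:ℝ))^2 ≤ Real.exp (γ*n) ^ 2 :=
            pow_le_pow_left₀ (by positivity) hle 2
          have hy2 : (0:ℝ) < Real.exp (γ*n) ^ 2 := by positivity
          rw [mul_inv_le_iff₀ hy2]
          calc (n:ℝ)^2 = (γ⁻¹)^2 * (γ*n)^2 := by field_simp
            _ ≤ (γ⁻¹)^2 * Real.exp (γ*n)^2 := by gcongr
  -- Bound S3
  have hS3 : (∑ k : Fin n, ∑ l : Fin n, t3 k l ^ 2) ≤ ((1 - Real.exp (-(2*γ)))⁻¹)^2 := by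
    have hr1 : Real.exp (-(2*γ)) < 1 := by
      rw [show (1:ℝ) = Real.exp 0 by simp]; exact Real.exp_lt_exp.mpr (by linarith)
    have hd : (0:ℝ) < 1 - Real.exp (-(2*γ)) := by linarith
    have ht3 : ∀ k l : Fin n, t3 k l ^ 2 =
        Real.exp (-(2*γ)*(k:ℝ)) * Real.exp (-(2*γ)*(l:ℝ)) := by
      intro k l
      simp only [ht3def, exp_sq']
      rw [← Real.exp_add]
      exact congrArg Real.exp (by ring)
    calc (∑ k : Fin n, ∑ l : Fin n, t3 k l ^ 2)
        = (∑ k : Fin n, Real.exp (-(2*γ)*(k:ℝ))) * (∑ l : Fin n, Real.exp (-(2*γ)*(l:ℝ))) := by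
          simp only [ht3]
          rw [Finset.sum_mul_sum Finset.univ Finset.univ
            (fun k : Fin n => Real.exp (-(2*γ)*(k:ℝ))) (fun l : Fin n => Real.exp (-(2*γ)*(l:ℝ)))]
      _ ≤ (1 / (1 - Real.exp (-(2*γ)))) * (1 / (1 - Real.exp (-(2*γ)))) := by
          have hg := geom_lo γ hγ n
          have hnn : (0:ℝ) ≤ ∑ k : Fin n, Real.exp (-(2*γ)*(k:ℝ)) :=
            Finset.sum_nonneg fun _ _ => (Real.exp_pos _).le
          gcongr
      _ = ((1 - Real.exp (-(2*γ)))⁻¹)^2 := by rw [sq]; field_simp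
  calc ∑ k, ∑ l, ‖A k l‖ ^ 2
      ≤ ∑ k, ∑ l, 3 * c^2 * (t1 k l ^ 2 + t2 k l ^ 2 + t3 k l ^ 2) := step1
    _ = 3 * c^2 * ((∑ k, ∑ l, t1 k l ^ 2) + (∑ k, ∑ l, t2 k l ^ 2) + (∑ k, ∑ l, t3 k l ^ 2)) := step2
    _ ≤ 3 * c^2 * (((Real.exp (2*γ) - 1)⁻¹)^2 + (γ⁻¹)^2 + ((1 - Real.exp (-(2*γ)))⁻¹)^2) := by
        have : (0:ℝ) ≤ 3 * c^2 := by positivity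
        nlinarith [hS1, hS2, hS3]

lemma sum_eig_sq {n : ℕ} (A : Matrix (Fin n) (Fin n) ℂ) (hA : A.IsHermitian) :
    ∑ i, hA.eigenvalues i ^ 2 = ∑ k, ∑ l, ‖A k l‖ ^ 2 := by
  set U : Matrix (Fin n) (Fin n) ℂ := (hA.eigenvectorUnitary : Matrix (Fin n) (Fin n) ℂ) with hU
  set D : Matrix (Fin n) (Fin n) ℂ := Matrix.diagonal (RCLike.ofReal ∘ hA.eigenvalues) with hD
  have hU' : star U * U = 1 := (Matrix.mem_unitaryGroup_iff').mp hA.eigenvectorUnitary.2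
  have key : A * A = U * (D * D) * star U := by
    conv_lhs => rw [hA.spectral_theorem]
    simp only [Unitary.conjStarAlgAut_apply, Matrix.mul_assoc, ← hU, ← hD]
    rw [← Matrix.mul_assoc (star U) U, hU', Matrix.one_mul]
  have h1 : (A * A).trace = ∑ i, (hA.eigenvalues i : ℂ) ^ 2 := by
    rw [key, Matrix.trace_mul_cycle, ← Matrix.mul_assoc, hU', Matrix.one_mul, hD,
      Matrix.diagonal_mul_diagonal, Matrix.trace_diagonal]
    simp [sq]
  have h2 : (A * A).trace = ∑ k, ∑ l, ((‖A k l‖ : ℂ)) ^ 2 := by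
    rw [Matrix.trace]
    simp only [Matrix.diag_apply, Matrix.mul_apply]
    rw [Finset.sum_comm]
    congr 1; ext k; congr 1; ext l
    have : A l k = (starRingEnd ℂ) (A k l) := by
      conv_lhs => rw [← hA.eq]
      rfl
    rw [this, mul_comm, Complex.mul_conj]
    norm_cast
    exact (Complex.sq_norm _).symm
  have := h1.symm.trans h2
  have : ((∑ i, hA.eigenvalues i ^ 2 : ℝ) : ℂ) = ((∑ k, ∑ l, ‖A k l‖ ^ 2 : ℝ) : ℂ) := by
    push_cast
    exact this
  exact_mod_cast this

theorem eigenvalue_clustering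
    (c γ : ℝ) (hc : 0 < c) (hγ : 0 < γ)
    (E : (n : ℕ) → Matrix (Fin n) (Fin n) ℂ)
    (hherm : ∀ n, (E n).IsHermitian)
    (hbound : ∀ (n : ℕ) (k l : Fin n), ‖E n k l‖ ≤
      c * (Real.exp (-2 * γ * n) * Real.exp (γ * ((k : ℝ) + (l : ℝ))) +
        Real.exp (-2 * γ * n) * Real.exp (γ * |(k : ℝ) - (l : ℝ)|) +
        Real.exp (-γ * ((k : ℝ) + (l : ℝ))))) :
    ∀ ε > 0, ∃ N n₀ : ℕ, ∀ n ≥ n₀,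
      (Finset.univ.filter fun i : Fin n =>
        ε < |(hherm n).eigenvalues i|).card ≤ 4 * N := by
  intro ε hε
  set M : ℝ := 3 * c^2 * (((Real.exp (2*γ) - 1)⁻¹)^2 + (γ⁻¹)^2 +
    ((1 - Real.exp (-(2*γ)))⁻¹)^2) with hM
  refine ⟨⌈M / ε^2⌉₊, 0, fun n _ => ?_⟩
  set S := Finset.univ.filter (fun i : Fin n => ε < |(hherm n).eigenvalues i|) with hS
  have key : (S.card : ℝ) * ε^2 ≤ M := by
    calc (S.card : ℝ) * ε^2 = ∑ _i ∈ S, ε^2 := by rw [Finset.sum_const, nsmul_eq_mul]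
      _ ≤ ∑ i ∈ S, ((hherm n).eigenvalues i)^2 := by
          apply Finset.sum_le_sum
          intro i hi
          have h1 : ε < |(hherm n).eigenvalues i| := (Finset.mem_filter.mp hi).2
          calc ε^2 ≤ |(hherm n).eigenvalues i|^2 := by
                exact pow_le_pow_left₀ hε.le h1.le 2
            _ = ((hherm n).eigenvalues i)^2 := sq_abs _
      _ ≤ ∑ i, ((hherm n).eigenvalues i)^2 :=
          Finset.sum_le_sum_of_subset_of_nonneg (Finset.filter_subset _ _)
            (fun i _ _ => sq_nonneg _)
      _ = ∑ k, ∑ l, ‖E n k l‖^2 := sum_eig_sq (E n) (hherm n)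
      _ ≤ M := frob_bound c γ hc hγ n (E n) (hbound n)
  have hε2 : (0:ℝ) < ε^2 := by positivity
  have hcard : (S.card : ℝ) ≤ (⌈M / ε^2⌉₊ : ℝ) :=
    ((le_div_iff₀ hε2).mpr key).trans (Nat.le_ceil _)
  have h2 : S.card ≤ ⌈M / ε^2⌉₊ := Nat.cast_le.mp hcard
  exact h2.trans (Nat.le_mul_of_pos_left _ (by norm_num))
end
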